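/- In a multi-level completely randomized experiment with N units and Q treatment arms of sizes N₁,…,N_Q (each N_q ≥ 1, Σ_q N_q = N), and a contrast matrix F ∈ ℝ^{Q×H} with Fᵀ1_Q = 0, the estimator τ̂ = Fᵀ Ŷ(·) is unbiased for τ = Fᵀ Ȳ(·), its covariance matrix equals Var(τ̂) = Fᵀ diag(S(q,q)/N_q)_{q=1}^Q F − N⁻¹ Fᵀ S F, and if moreover N_q ≥ 2 for all q, the variance estimator V̂ = Fᵀ diag(Ŝ(q,q)/N_q)_{q=1}^Q F satisfies E[V̂] − Var(τ̂) = N⁻¹ Fᵀ S F, which is positive semidefinite, so V̂ is conservative in expectation. -/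

import Mathlib

open Finset

/-- Expectation of `f` under the uniform distribution on the finite set `s`. -/
noncomputable def avgOver {α : Type*} (s : Finset α) (f : α → ℝ) : ℝ :=
  (∑ a ∈ s, f a) / (s.card : ℝ)

/-- Covariance of `f` and `g` under the uniform distribution on the finite set `s`. -/
noncomputable def covOver {α : Type*} (s : Finset α) (f g : α → ℝ) : ℝ :=
  avgOver s fun a => (f a - avgOver s f) * (g a - avgOver s g)

/-- The set of treatment assignments in a multi-level completely randomized experiment:
vectors `z : {1,…,N} → {1,…,Q}` with exactly `Nq q` units assigned to arm `q`. -/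
def assignSet (N Q : ℕ) (Nq : Fin Q → ℕ) : Finset (Fin N → Fin Q) :=
  Finset.univ.filter fun z => ∀ q, (Finset.univ.filter fun i => z i = q).card = Nq q

/-- Observed outcome `Yᵢ = Σ_q Yᵢ(q) 1{Zᵢ = q}`. -/
noncomputable def obsQ {N Q : ℕ} (Y : Fin N → Fin Q → ℝ) (z : Fin N → Fin Q) (i : Fin N) : ℝ :=
  ∑ q, if z i = q then Y i q else 0

/-- Arm-wise sample mean `Ŷ(q) = N_q⁻¹ Σᵢ Yᵢ 1{Zᵢ = q}`. -/
noncomputable def yhatQ {N Q : ℕ} (Y : Fin N → Fin Q → ℝ) (Nq : Fin Q → ℕ)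
    (z : Fin N → Fin Q) (q : Fin Q) : ℝ :=
  (∑ i, if z i = q then obsQ Y z i else 0) / (Nq q : ℝ)

/-- Finite-population mean `Ȳ(q)`. -/
noncomputable def ybarQ {N Q : ℕ} (Y : Fin N → Fin Q → ℝ) (q : Fin Q) : ℝ :=
  (∑ i, Y i q) / (N : ℝ)

/-- Finite-population covariance
`S(q,q') = (N-1)⁻¹ Σᵢ (Yᵢ(q)-Ȳ(q))(Yᵢ(q')-Ȳ(q'))`. -/
noncomputable def fpCovQ {N Q : ℕ} (Y : Fin N → Fin Q → ℝ) (q q' : Fin Q) : ℝ :=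
  (∑ i, (Y i q - ybarQ Y q) * (Y i q' - ybarQ Y q')) / ((N : ℝ) - 1)

/-- The average effect `τ = Fᵀ Ȳ(·)`. -/
noncomputable def tauQ {N Q H : ℕ} (Y : Fin N → Fin Q → ℝ) (F : Fin Q → Fin H → ℝ)
    (h : Fin H) : ℝ :=
  ∑ q, F q h * ybarQ Y q

/-- The estimator `τ̂ = Fᵀ Ŷ(·)`. -/
noncomputable def tauhatQ {N Q H : ℕ} (Y : Fin N → Fin Q → ℝ) (Nq : Fin Q → ℕ)
    (F : Fin Q → Fin H → ℝ) (z : Fin N → Fin Q) (h : Fin H) : ℝ :=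
  ∑ q, F q h * yhatQ Y Nq z q

/-- Arm-wise sample variance `Ŝ(q,q) = (N_q - 1)⁻¹ Σᵢ (Yᵢ - Ŷ(q))² 1{Zᵢ = q}`. -/
noncomputable def shatQ {N Q : ℕ} (Y : Fin N → Fin Q → ℝ) (Nq : Fin Q → ℕ)
    (z : Fin N → Fin Q) (q : Fin Q) : ℝ :=
  (∑ i, if z i = q then (obsQ Y z i - yhatQ Y Nq z q) ^ 2 else 0) / ((Nq q : ℝ) - 1)

/-- The variance estimator `V̂ = Fᵀ diag(Ŝ(q,q)/N_q) F`, entrywise. -/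
noncomputable def vhatQ {N Q H : ℕ} (Y : Fin N → Fin Q → ℝ) (Nq : Fin Q → ℕ)
    (F : Fin Q → Fin H → ℝ) (z : Fin N → Fin Q) (h h' : Fin H) : ℝ :=
  ∑ q, F q h * F q h' * shatQ Y Nq z q / (Nq q : ℝ)

/-! ### Auxiliary lemmas -/

/-- Indicator `1{z i = q}` as a real number. -/
noncomputable def ind {N Q : ℕ} (i : Fin N) (q : Fin Q) (z : Fin N → Fin Q) : ℝ :=
  if z i = q then 1 else 0

section Aux

lemma assignSet_nonempty (N Q : ℕ) (Nq : Fin Q → ℕ) (hsum : ∑ q, Nq q = N) :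
    (assignSet N Q Nq).Nonempty := by
  have hcard : Fintype.card ((q : Fin Q) × Fin (Nq q)) = Fintype.card (Fin N) := by
    simp [Fintype.card_sigma, hsum]
  let e := Fintype.equivOfCardEq hcard
  refine ⟨fun i => (e.symm i).1, ?_⟩
  simp only [assignSet, mem_filter, mem_univ, true_and]
  intro q
  have himg : (Finset.univ.filter fun i => (e.symm i).1 = q)
      = Finset.image e (Finset.univ.filter fun s : (q' : Fin Q) × Fin (Nq q') => s.1 = q) := by
    ext i
    simp only [mem_filter, mem_univ, true_and, mem_image]
    constructor
    · intro h; exact ⟨e.symm i, h, e.apply_symm_apply i⟩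
    · rintro ⟨s, hs, rfl⟩; simpa using hs
  rw [himg, Finset.card_image_of_injective _ e.injective]
  have hmap : (Finset.univ.filter fun s : (q' : Fin Q) × Fin (Nq q') => s.1 = q)
      = Finset.univ.map ⟨Sigma.mk q, sigma_mk_injective⟩ := by
    ext ⟨q', y⟩
    simp only [mem_filter, mem_univ, true_and, mem_map, Function.Embedding.coeFn_mk]
    constructor
    · rintro rfl; exact ⟨y, rfl⟩
    · rintro ⟨y', h⟩
      exact (Sigma.mk.inj_iff.mp h).1.symm
  rw [hmap, Finset.card_map, Finset.card_univ, Fintype.card_fin]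

lemma comp_mem_assignSet {N Q : ℕ} {Nq : Fin Q → ℕ} (σ : Equiv.Perm (Fin N))
    {z : Fin N → Fin Q} (hz : z ∈ assignSet N Q Nq) : z ∘ σ ∈ assignSet N Q Nq := by
  simp only [assignSet, mem_filter, mem_univ, true_and] at hz ⊢
  intro q
  have himg : (Finset.univ.filter fun i => z (σ i) = q)
      = Finset.image σ.symm (Finset.univ.filter fun i => z i = q) := by
    ext i
    simp only [mem_filter, mem_univ, true_and, mem_image]
    constructor
    · intro h; exact ⟨σ i, h, σ.symm_apply_apply i⟩
    · rintro ⟨j, hj, rfl⟩; simpa using hj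
  rw [Function.comp_def, himg, Finset.card_image_of_injective _ σ.symm.injective]
  exact hz q

lemma sum_comp_assignSet {N Q : ℕ} {Nq : Fin Q → ℕ} (σ : Equiv.Perm (Fin N))
    (f : (Fin N → Fin Q) → ℝ) :
    ∑ z ∈ assignSet N Q Nq, f (z ∘ σ) = ∑ z ∈ assignSet N Q Nq, f z := by
  apply Finset.sum_nbij' (i := fun z => z ∘ σ) (j := fun z => z ∘ σ.symm)
  · intro z hz; exact comp_mem_assignSet σ hz
  · intro z hz; exact comp_mem_assignSet σ.symm hz
  · intro z _; funext i; simp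
  · intro z _; funext i; simp
  · intro z _; rfl

lemma exists_perm_two {n : ℕ} {i j i' j' : Fin n} (hij : i ≠ j) (hij' : i' ≠ j') :
    ∃ σ : Equiv.Perm (Fin n), σ i = i' ∧ σ j = j' := by
  classical
  set σ₁ := Equiv.swap i i' with hσ₁
  set j₁ := σ₁ j with hj₁def
  have hj₁ : j₁ ≠ i' := by
    intro h
    have : σ₁ j = σ₁ i := by simp [hj₁def, hσ₁, Equiv.swap_apply_left, h] at h ⊢; exact h
    exact hij (σ₁.injective this).symm
  refine ⟨σ₁.trans (Equiv.swap j₁ j'), ?_, ?_⟩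
  · simp only [Equiv.trans_apply]
    rw [hσ₁, Equiv.swap_apply_left, Equiv.swap_apply_of_ne_of_ne (Ne.symm hj₁) hij']
  · simp only [Equiv.trans_apply, ← hj₁def, Equiv.swap_apply_left]

lemma sum_ind {N Q : ℕ} {Nq : Fin Q → ℕ} {z : Fin N → Fin Q}
    (hz : z ∈ assignSet N Q Nq) (q : Fin Q) : ∑ i, ind i q z = (Nq q : ℝ) := by
  simp only [assignSet, mem_filter, mem_univ, true_and] at hz
  rw [← hz q]
  simp [ind, Finset.sum_boole]

lemma ind_mul_ind_self {N Q : ℕ} (i : Fin N) (q q' : Fin Q) (z : Fin N → Fin Q) :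
    ind i q z * ind i q' z = if q = q' then ind i q z else 0 := by
  simp only [ind]
  by_cases h : z i = q <;> by_cases h' : z i = q' <;> by_cases hqq : q = q' <;>
    simp_all

end Aux

section Moments
variable {N Q : ℕ} (Nq : Fin Q → ℕ)

lemma sumS_ind_const (i j : Fin N) (q : Fin Q) :
    ∑ z ∈ assignSet N Q Nq, ind i q z = ∑ z ∈ assignSet N Q Nq, ind j q z := by
  classical
  have h := sum_comp_assignSet (Nq := Nq) (Equiv.swap j i) (fun z => ind j q z)
  rw [← h]
  apply Finset.sum_congr rfl
  intro z _
  simp [ind, Function.comp, Equiv.swap_apply_left]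

lemma P1 (i : Fin N) (q : Fin Q) :
    (N : ℝ) * ∑ z ∈ assignSet N Q Nq, ind i q z
      = ((assignSet N Q Nq).card : ℝ) * (Nq q : ℝ) := by
  classical
  have htot : ∑ j : Fin N, ∑ z ∈ assignSet N Q Nq, ind j q z
      = ((assignSet N Q Nq).card : ℝ) * (Nq q : ℝ) := by
    rw [Finset.sum_comm]
    rw [Finset.sum_congr rfl fun z hz => sum_ind hz q]
    simp [mul_comm]
  calc (N : ℝ) * ∑ z ∈ assignSet N Q Nq, ind i q z
      = ∑ _j : Fin N, ∑ z ∈ assignSet N Q Nq, ind i q z := by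
        simp [Finset.sum_const, nsmul_eq_mul]
    _ = ∑ j : Fin N, ∑ z ∈ assignSet N Q Nq, ind j q z :=
        Finset.sum_congr rfl fun j _ => sumS_ind_const Nq i j q
    _ = _ := htot

lemma sumS_ind2_const {i j i' j' : Fin N} (hij : i ≠ j) (hij' : i' ≠ j') (q q' : Fin Q) :
    ∑ z ∈ assignSet N Q Nq, ind i q z * ind j q' z
      = ∑ z ∈ assignSet N Q Nq, ind i' q z * ind j' q' z := by
  classical
  obtain ⟨σ, hi, hj⟩ := exists_perm_two hij' hij
  have h := sum_comp_assignSet (Nq := Nq) σ (fun z => ind i' q z * ind j' q' z)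
  rw [← h]
  apply Finset.sum_congr rfl
  intro z _
  simp [ind, Function.comp, hi, hj]

lemma P2 {i j : Fin N} (hij : i ≠ j) (q q' : Fin Q) :
    (N : ℝ) * ((N : ℝ) - 1) * ∑ z ∈ assignSet N Q Nq, ind i q z * ind j q' z
      = ((assignSet N Q Nq).card : ℝ) *
        ((Nq q : ℝ) * (Nq q' : ℝ) - if q = q' then (Nq q : ℝ) else 0) := by
  classical
  set S := assignSet N Q Nq with hS
  set c := ∑ z ∈ S, ind i q z * ind j q' z with hc
  have hconst : ∀ i' j' : Fin N, i' ≠ j' → ∑ z ∈ S, ind i' q z * ind j' q' z = c := by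
    intro i' j' h
    exact sumS_ind2_const Nq h hij q q'
  have htot : ∑ i' : Fin N, ∑ j' : Fin N, ∑ z ∈ S, ind i' q z * ind j' q' z
      = (S.card : ℝ) * ((Nq q : ℝ) * (Nq q' : ℝ)) := by
    have h1 : ∀ i' : Fin N, ∑ j' : Fin N, ∑ z ∈ S, ind i' q z * ind j' q' z
        = ∑ z ∈ S, ∑ j' : Fin N, ind i' q z * ind j' q' z := fun _ => Finset.sum_comm
    have h2 : ∀ z ∈ S, ∑ i' : Fin N, ∑ j' : Fin N, ind i' q z * ind j' q' z
        = (Nq q : ℝ) * (Nq q' : ℝ) := by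
      intro z hz
      rw [← Finset.sum_mul_sum, sum_ind hz q, sum_ind hz q']
    calc ∑ i' : Fin N, ∑ j' : Fin N, ∑ z ∈ S, ind i' q z * ind j' q' z
        = ∑ i' : Fin N, ∑ z ∈ S, ∑ j' : Fin N, ind i' q z * ind j' q' z :=
          Finset.sum_congr rfl fun i' _ => h1 i'
      _ = ∑ z ∈ S, ∑ i' : Fin N, ∑ j' : Fin N, ind i' q z * ind j' q' z := Finset.sum_comm
      _ = ∑ _z ∈ S, (Nq q : ℝ) * (Nq q' : ℝ) := Finset.sum_congr rfl h2
      _ = (S.card : ℝ) * ((Nq q : ℝ) * (Nq q' : ℝ)) := by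
          rw [Finset.sum_const, nsmul_eq_mul]
  have hdiag : ∑ i' : Fin N, ∑ z ∈ S, ind i' q z * ind i' q' z
      = if q = q' then (S.card : ℝ) * (Nq q : ℝ) else 0 := by
    have h1 : ∀ i' : Fin N, ∑ z ∈ S, ind i' q z * ind i' q' z
        = if q = q' then ∑ z ∈ S, ind i' q z else 0 := by
      intro i'
      rw [Finset.sum_congr rfl fun z _ => ind_mul_ind_self i' q q' z]
      split <;> simp
    rw [Finset.sum_congr rfl fun i' _ => h1 i']
    split
    · rw [Finset.sum_comm]
      rw [Finset.sum_congr rfl fun z hz => sum_ind hz q]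
      simp [mul_comm, hS]
    · simp
  have hsplit : ∀ i' : Fin N, ∑ j' : Fin N, ∑ z ∈ S, ind i' q z * ind j' q' z
      = ∑ z ∈ S, ind i' q z * ind i' q' z + ((N : ℝ) - 1) * c := by
    intro i'
    rw [← Finset.add_sum_erase _ _ (Finset.mem_univ i')]
    congr 1
    rw [Finset.sum_congr rfl fun j' hj' => hconst i' j' (Ne.symm (Finset.ne_of_mem_erase hj'))]
    rw [Finset.sum_const, nsmul_eq_mul, Finset.card_erase_of_mem (Finset.mem_univ i')]
    have hN : 1 ≤ N := Nat.one_le_iff_ne_zero.mpr (by rintro rfl; exact i.elim0)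
    rw [Finset.card_univ, Fintype.card_fin, Nat.cast_sub hN, Nat.cast_one]
  have key : (S.card : ℝ) * ((Nq q : ℝ) * (Nq q' : ℝ))
      = (if q = q' then (S.card : ℝ) * (Nq q : ℝ) else 0) + (N : ℝ) * (((N : ℝ) - 1) * c) := by
    rw [← htot, Finset.sum_congr rfl fun i' _ => hsplit i', Finset.sum_add_distrib, hdiag]
    simp [Finset.sum_const, nsmul_eq_mul]
  have key2 : (N : ℝ) * (((N : ℝ) - 1) * c)
      = (S.card : ℝ) * ((Nq q : ℝ) * (Nq q' : ℝ))
        - (if q = q' then (S.card : ℝ) * (Nq q : ℝ) else 0) := by linarith [key]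
  rw [mul_assoc, key2]
  split <;> ring


lemma M1 (c : Fin N → ℝ) (q : Fin Q) :
    (N : ℝ) * ∑ z ∈ assignSet N Q Nq, ∑ i, ind i q z * c i
      = ((assignSet N Q Nq).card : ℝ) * (Nq q : ℝ) * ∑ i, c i := by
  classical
  rw [Finset.sum_comm, Finset.mul_sum]
  have h : ∀ i : Fin N, (N : ℝ) * ∑ z ∈ assignSet N Q Nq, ind i q z * c i
      = ((assignSet N Q Nq).card : ℝ) * (Nq q : ℝ) * c i := by
    intro i
    rw [← Finset.sum_mul, ← mul_assoc, P1 Nq i q]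
  rw [Finset.sum_congr rfl fun i _ => h i, ← Finset.mul_sum]

lemma M2 (c d : Fin N → ℝ) (q q' : Fin Q) :
    (N : ℝ) * ((N : ℝ) - 1) *
      ∑ z ∈ assignSet N Q Nq, (∑ i, ind i q z * c i) * (∑ j, ind j q' z * d j)
    = ((assignSet N Q Nq).card : ℝ) *
      ((if q = q' then ((N : ℝ) - 1) * (Nq q : ℝ) * ∑ i, c i * d i else 0)
        + ((Nq q : ℝ) * (Nq q' : ℝ) - if q = q' then (Nq q : ℝ) else 0)
          * ((∑ i, c i) * (∑ i, d i) - ∑ i, c i * d i)) := by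
  classical
  set S := assignSet N Q Nq with hS
  set M := (S.card : ℝ) with hM
  -- expand the product of sums
  have hexp : ∀ z, (∑ i, ind i q z * c i) * (∑ j, ind j q' z * d j)
      = ∑ i, ∑ j, (ind i q z * ind j q' z) * (c i * d j) := by
    intro z
    rw [Finset.sum_mul_sum]
    apply Finset.sum_congr rfl; intro i _
    apply Finset.sum_congr rfl; intro j _
    ring
  rw [Finset.sum_congr rfl fun z _ => hexp z]
  -- swap z to the inside
  have hswap : ∑ z ∈ S, ∑ i, ∑ j, (ind i q z * ind j q' z) * (c i * d j)
      = ∑ i, ∑ j, (c i * d j) * ∑ z ∈ S, ind i q z * ind j q' z := by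
    rw [Finset.sum_comm]
    apply Finset.sum_congr rfl; intro i _
    rw [Finset.sum_comm]
    apply Finset.sum_congr rfl; intro j _
    rw [Finset.mul_sum]
    apply Finset.sum_congr rfl; intro z _
    ring
  rw [hswap]
  -- split each inner j-sum into j = i and j ≠ i
  have hsplit : ∀ i : Fin N, ∑ j, (c i * d j) * ∑ z ∈ S, ind i q z * ind j q' z
      = (c i * d i) * (∑ z ∈ S, ind i q z * ind i q' z)
        + ∑ j ∈ Finset.univ.erase i, (c i * d j) * ∑ z ∈ S, ind i q z * ind j q' z := by
    intro i
    rw [← Finset.add_sum_erase _ _ (Finset.mem_univ i)]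
  rw [Finset.sum_congr rfl fun i _ => hsplit i, Finset.sum_add_distrib, mul_add, mul_add]
  congr 1
  · -- diagonal part
    have hd : ∀ i : Fin N, (N : ℝ) * ((c i * d i) * ∑ z ∈ S, ind i q z * ind i q' z)
        = (if q = q' then M * (Nq q : ℝ) else 0) * (c i * d i) := by
      intro i
      have : ∑ z ∈ S, ind i q z * ind i q' z
          = if q = q' then ∑ z ∈ S, ind i q z else 0 := by
        rw [Finset.sum_congr rfl fun z _ => ind_mul_ind_self i q q' z]
        split <;> simp
      rw [this]
      split
      · rw [show (N:ℝ) * ((c i * d i) * ∑ z ∈ S, ind i q z)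
            = (c i * d i) * ((N:ℝ) * ∑ z ∈ S, ind i q z) by ring, P1 Nq i q]
        ring
      · ring_nf
    calc (N : ℝ) * ((N : ℝ) - 1) * ∑ i, (c i * d i) * ∑ z ∈ S, ind i q z * ind i q' z
        = ((N : ℝ) - 1) * ∑ i, (N : ℝ) * ((c i * d i) * ∑ z ∈ S, ind i q z * ind i q' z) := by
          rw [Finset.mul_sum, Finset.mul_sum]
          apply Finset.sum_congr rfl; intro i _; ring
      _ = ((N : ℝ) - 1) * ∑ i, (if q = q' then M * (Nq q : ℝ) else 0) * (c i * d i) := by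
          rw [Finset.sum_congr rfl fun i _ => hd i]
      _ = M * (if q = q' then ((N : ℝ) - 1) * (Nq q : ℝ) * ∑ i, c i * d i else 0) := by
          rw [← Finset.mul_sum]
          split <;> ring
  · -- off-diagonal part
    have hod : ∀ i : Fin N, ∀ j ∈ Finset.univ.erase i,
        (N : ℝ) * ((N : ℝ) - 1) * ((c i * d j) * ∑ z ∈ S, ind i q z * ind j q' z)
        = M * ((Nq q : ℝ) * (Nq q' : ℝ) - if q = q' then (Nq q : ℝ) else 0) * (c i * d j) := by
      intro i j hj
      have hij : i ≠ j := (Finset.ne_of_mem_erase hj).symm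
      rw [show (N : ℝ) * ((N : ℝ) - 1) * ((c i * d j) * ∑ z ∈ S, ind i q z * ind j q' z)
          = (c i * d j) * ((N : ℝ) * ((N : ℝ) - 1) * ∑ z ∈ S, ind i q z * ind j q' z) by ring,
        P2 Nq hij q q']
      ring
    have hsum2 : ∑ i, ∑ j ∈ Finset.univ.erase i, c i * d j
        = (∑ i, c i) * (∑ i, d i) - ∑ i, c i * d i := by
      have : ∀ i : Fin N, ∑ j ∈ Finset.univ.erase i, c i * d j
          = (∑ j, c i * d j) - c i * d i := by
        intro i
        rw [Finset.sum_erase_eq_sub (Finset.mem_univ i)]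
      rw [Finset.sum_congr rfl fun i _ => this i, Finset.sum_sub_distrib,
        Finset.sum_mul_sum]
    calc (N : ℝ) * ((N : ℝ) - 1) *
          ∑ i, ∑ j ∈ Finset.univ.erase i, (c i * d j) * ∑ z ∈ S, ind i q z * ind j q' z
        = ∑ i, ∑ j ∈ Finset.univ.erase i,
            (N : ℝ) * ((N : ℝ) - 1) * ((c i * d j) * ∑ z ∈ S, ind i q z * ind j q' z) := by
          rw [Finset.mul_sum]
          apply Finset.sum_congr rfl; intro i _
          rw [Finset.mul_sum]
      _ = ∑ i, ∑ j ∈ Finset.univ.erase i,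
            M * ((Nq q : ℝ) * (Nq q' : ℝ) - if q = q' then (Nq q : ℝ) else 0) * (c i * d j) := by
          apply Finset.sum_congr rfl; intro i _
          exact Finset.sum_congr rfl (hod i)
      _ = M * ((Nq q : ℝ) * (Nq q' : ℝ) - if q = q' then (Nq q : ℝ) else 0)
            * ∑ i, ∑ j ∈ Finset.univ.erase i, c i * d j := by
          rw [Finset.mul_sum]
          apply Finset.sum_congr rfl; intro i _
          rw [Finset.mul_sum]
      _ = M * (((Nq q : ℝ) * (Nq q' : ℝ) - if q = q' then (Nq q : ℝ) else 0)
            * ((∑ i, c i) * (∑ i, d i) - ∑ i, c i * d i)) := by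
          rw [hsum2]; ring

end Moments

lemma covOver_eq {α : Type*} {s : Finset α} (hs : s.Nonempty) (f g : α → ℝ) :
    covOver s f g = avgOver s (fun a => f a * g a) - avgOver s f * avgOver s g := by
  have hM : (s.card : ℝ) ≠ 0 := Nat.cast_ne_zero.mpr (Finset.card_ne_zero_of_mem hs.choose_spec)
  simp only [covOver, avgOver]
  rw [Finset.sum_congr rfl (fun a _ => by ring :
    ∀ a ∈ s, (f a - (∑ b ∈ s, f b) / s.card) * (g a - (∑ b ∈ s, g b) / s.card)
      = f a * g a - f a * ((∑ b ∈ s, g b) / s.card) - ((∑ b ∈ s, f b) / s.card) * g a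
        + ((∑ b ∈ s, f b) / s.card) * ((∑ b ∈ s, g b) / s.card))]
  rw [Finset.sum_add_distrib, Finset.sum_sub_distrib, Finset.sum_sub_distrib,
    ← Finset.sum_mul, ← Finset.mul_sum, Finset.sum_const, nsmul_eq_mul]
  field_simp
  ring

lemma avgOver_congr {α : Type*} {s : Finset α} {f g : α → ℝ} (h : ∀ a ∈ s, f a = g a) :
    avgOver s f = avgOver s g := by
  simp only [avgOver]
  rw [Finset.sum_congr rfl h]

lemma avgOver_weighted {α : Type*} {Q : ℕ} (s : Finset α) (w : Fin Q → ℝ) (f : Fin Q → α → ℝ) :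
    avgOver s (fun a => ∑ q, w q * f q a) = ∑ q, w q * avgOver s (f q) := by
  simp only [avgOver]
  rw [Finset.sum_comm]
  rw [Finset.sum_div]
  apply Finset.sum_congr rfl; intro q _
  rw [← Finset.mul_sum, mul_div_assoc]


lemma avgOver_sum {α : Type*} {ι : Type*} [Fintype ι] (s : Finset α) (g : ι → α → ℝ) :
    avgOver s (fun a => ∑ i, g i a) = ∑ i, avgOver s (g i) := by
  simp only [avgOver]
  rw [Finset.sum_comm, Finset.sum_div]

lemma avgOver_const_mul {α : Type*} (s : Finset α) (c : ℝ) (f : α → ℝ) :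
    avgOver s (fun a => c * f a) = c * avgOver s f := by
  simp only [avgOver, ← Finset.mul_sum, mul_div_assoc]

section Stats
variable {N Q : ℕ} (Y : Fin N → Fin Q → ℝ) (Nq : Fin Q → ℕ)

lemma obsQ_eq (z : Fin N → Fin Q) (i : Fin N) : obsQ Y z i = Y i (z i) := by
  simp [obsQ]

lemma yhat_eq (z : Fin N → Fin Q) (q : Fin Q) :
    yhatQ Y Nq z q = (∑ i, ind i q z * Y i q) / (Nq q : ℝ) := by
  simp only [yhatQ]
  congr 1
  apply Finset.sum_congr rfl; intro i _
  simp only [ind, obsQ_eq]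
  by_cases h : z i = q <;> simp [h]

lemma shat_eq {Nq : Fin Q → ℕ} {z : Fin N → Fin Q} (hz : z ∈ assignSet N Q Nq) (q : Fin Q) :
    shatQ Y Nq z q = ((∑ i, ind i q z * (Y i q) ^ 2)
        - (∑ i, ind i q z * Y i q) ^ 2 / (Nq q : ℝ)) / ((Nq q : ℝ) - 1) := by
  simp only [shatQ]
  congr 1
  have h1 : ∀ i, (if z i = q then (obsQ Y z i - yhatQ Y Nq z q) ^ 2 else 0)
      = ind i q z * (Y i q) ^ 2 - 2 * yhatQ Y Nq z q * (ind i q z * Y i q)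
        + ind i q z * (yhatQ Y Nq z q) ^ 2 := by
    intro i
    simp only [ind, obsQ_eq]
    by_cases h : z i = q
    · simp only [h, if_pos rfl, if_pos]
      simp [h]
      ring
    · simp [h]
  rw [Finset.sum_congr rfl fun i _ => h1 i]
  rw [Finset.sum_add_distrib, Finset.sum_sub_distrib, ← Finset.mul_sum, ← Finset.sum_mul,
    sum_ind hz q, yhat_eq]
  rcases eq_or_ne ((Nq q : ℝ)) 0 with h0 | h0
  · simp [h0]
  · field_simp
    ring


lemma fpCov_eq (hN : (N : ℝ) ≠ 0) (q q' : Fin Q) :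
    fpCovQ Y q q' = ((∑ i, Y i q * Y i q') - (∑ i, Y i q) * (∑ i, Y i q') / (N : ℝ))
      / ((N : ℝ) - 1) := by
  simp only [fpCovQ, ybarQ]
  congr 1
  rw [Finset.sum_congr rfl (fun i _ => by ring :
    ∀ i ∈ Finset.univ, (Y i q - (∑ j, Y j q) / N) * (Y i q' - (∑ j, Y j q') / N)
      = Y i q * Y i q' - ((∑ j, Y j q') / N) * Y i q - ((∑ j, Y j q) / N) * Y i q'
        + ((∑ j, Y j q) / N) * ((∑ j, Y j q') / N))]
  rw [Finset.sum_add_distrib, Finset.sum_sub_distrib, Finset.sum_sub_distrib,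
    ← Finset.mul_sum, ← Finset.mul_sum, Finset.sum_const, Finset.card_univ,
    Fintype.card_fin, nsmul_eq_mul]
  field_simp
  ring

variable {Nq : Fin Q → ℕ}

lemma sumS_yhat (hN : (N : ℝ) ≠ 0) (q : Fin Q) (hm : (Nq q : ℝ) ≠ 0) :
    ∑ z ∈ assignSet N Q Nq, yhatQ Y Nq z q
      = ((assignSet N Q Nq).card : ℝ) * (∑ i, Y i q) / (N : ℝ) := by
  rw [Finset.sum_congr rfl fun z _ => yhat_eq Y Nq z q, ← Finset.sum_div]
  have h := M1 Nq (fun i => Y i q) q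
  rw [Finset.sum_div, Finset.sum_congr rfl (fun z _ => rfl), ← Finset.sum_div,
    div_eq_div_iff hm hN]
  linear_combination h
lemma avg_yhat (hN : (N : ℝ) ≠ 0) (hM : ((assignSet N Q Nq).card : ℝ) ≠ 0)
    (q : Fin Q) (hm : (Nq q : ℝ) ≠ 0) :
    avgOver (assignSet N Q Nq) (fun z => yhatQ Y Nq z q) = ybarQ Y q := by
  rw [avgOver, sumS_yhat Y hN q hm, ybarQ]
  field_simp

lemma avg_yhat_mul (hN : (N : ℝ) ≠ 0) (hN1 : (N : ℝ) - 1 ≠ 0)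
    (hM : ((assignSet N Q Nq).card : ℝ) ≠ 0) (q q' : Fin Q)
    (hm : (Nq q : ℝ) ≠ 0) (hm' : (Nq q' : ℝ) ≠ 0) :
    avgOver (assignSet N Q Nq) (fun z => yhatQ Y Nq z q * yhatQ Y Nq z q')
      = ybarQ Y q * ybarQ Y q'
        + (if q = q' then fpCovQ Y q q / (Nq q : ℝ) else 0) - fpCovQ Y q q' / (N : ℝ) := by
  have hprod : ∀ z : Fin N → Fin Q, yhatQ Y Nq z q * yhatQ Y Nq z q'
      = ((∑ i, ind i q z * Y i q) * (∑ i, ind i q' z * Y i q')) / ((Nq q : ℝ) * (Nq q' : ℝ)) := by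
    intro z
    rw [yhat_eq, yhat_eq, div_mul_div_comm]
  rw [avgOver, Finset.sum_congr rfl fun z _ => hprod z, ← Finset.sum_div]
  have h := M2 Nq (fun i => Y i q) (fun i => Y i q') q q'
  have hX : ∑ z ∈ assignSet N Q Nq,
        (∑ i, ind i q z * Y i q) * (∑ i, ind i q' z * Y i q')
      = ((assignSet N Q Nq).card : ℝ) *
          ((if q = q' then ((N : ℝ) - 1) * (Nq q : ℝ) * ∑ i, Y i q * Y i q' else 0)
            + ((Nq q : ℝ) * (Nq q' : ℝ) - if q = q' then (Nq q : ℝ) else 0)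
              * ((∑ i, Y i q) * (∑ i, Y i q') - ∑ i, Y i q * Y i q'))
          / ((N : ℝ) * ((N : ℝ) - 1)) := by
    rw [eq_div_iff (mul_ne_zero hN hN1)]
    linear_combination h
  rw [hX]
  rcases eq_or_ne q q' with rfl | hqq
  · simp only [if_pos rfl, ↓reduceIte]
    rw [fpCov_eq Y hN, ybarQ]
    field_simp
    ring
  · simp only [if_neg hqq]
    rw [fpCov_eq Y hN]
    simp only [ybarQ]
    field_simp
    ring

lemma avg_shat (hN : (N : ℝ) ≠ 0) (hN1 : (N : ℝ) - 1 ≠ 0)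
    (hM : ((assignSet N Q Nq).card : ℝ) ≠ 0) (q : Fin Q)
    (hm : (Nq q : ℝ) ≠ 0) (hm1 : (Nq q : ℝ) - 1 ≠ 0) :
    avgOver (assignSet N Q Nq) (fun z => shatQ Y Nq z q) = fpCovQ Y q q := by
  rw [avgOver, Finset.sum_congr rfl fun z hz => shat_eq Y hz q]
  have h1 := M1 Nq (fun i => (Y i q) ^ 2) q
  have hB : ∑ z ∈ assignSet N Q Nq, ∑ i, ind i q z * (Y i q) ^ 2
      = ((assignSet N Q Nq).card : ℝ) * (Nq q : ℝ) * (∑ i, (Y i q) ^ 2) / (N : ℝ) := by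
    rw [eq_div_iff hN]; linear_combination h1
  have h2 := M2 Nq (fun i => Y i q) (fun i => Y i q) q q
  have hG : ∑ z ∈ assignSet N Q Nq, (∑ i, ind i q z * Y i q) ^ 2
      = ((assignSet N Q Nq).card : ℝ) *
          (((N : ℝ) - 1) * (Nq q : ℝ) * (∑ i, Y i q * Y i q)
            + ((Nq q : ℝ) * (Nq q : ℝ) - (Nq q : ℝ))
              * ((∑ i, Y i q) * (∑ i, Y i q) - ∑ i, Y i q * Y i q))
          / ((N : ℝ) * ((N : ℝ) - 1)) := by
    rw [eq_div_iff (mul_ne_zero hN hN1)]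
    simp only [eq_self_iff_true, if_true] at h2
    have : ∀ z : Fin N → Fin Q, (∑ i, ind i q z * Y i q) ^ 2
        = (∑ i, ind i q z * Y i q) * (∑ i, ind i q z * Y i q) := fun z => sq (∑ i, ind i q z * Y i q) ▸ by ring
    rw [Finset.sum_congr rfl fun z _ => this z]
    linear_combination h2
  have hsplit : ∑ z ∈ assignSet N Q Nq,
        ((∑ i, ind i q z * (Y i q) ^ 2) - (∑ i, ind i q z * Y i q) ^ 2 / (Nq q : ℝ))
          / ((Nq q : ℝ) - 1)
      = ((∑ z ∈ assignSet N Q Nq, ∑ i, ind i q z * (Y i q) ^ 2)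
          - (∑ z ∈ assignSet N Q Nq, (∑ i, ind i q z * Y i q) ^ 2) / (Nq q : ℝ))
          / ((Nq q : ℝ) - 1) := by
    rw [← Finset.sum_div, Finset.sum_sub_distrib, ← Finset.sum_div]
  rw [hsplit, hB, hG, fpCov_eq Y hN]
  have hBB : ∑ i, Y i q * Y i q = ∑ i, (Y i q) ^ 2 :=
    Finset.sum_congr rfl fun i _ => (sq (Y i q)).symm
  rw [hBB]
  field_simp
  ring

end Stats

lemma posSemidef_of_zero {H : ℕ} {M : Matrix (Fin H) (Fin H) ℝ} (h : ∀ a b, M a b = 0) :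
    M.PosSemidef := by
  have hM : M = 0 := by ext a b; exact h a b
  rw [hM]
  refine ⟨?_, ?_⟩
  · ext a b; simp [Matrix.conjTranspose_apply]
  · intro x; simp

/-- In a multi-level completely randomized experiment with a contrast matrix `F`
(`Fᵀ 1_Q = 0`), the estimator `τ̂ = Fᵀ Ŷ(·)` is unbiased for `τ = Fᵀ Ȳ(·)`, its covariance
matrix equals `Fᵀ diag(S(q,q)/N_q) F - N⁻¹ Fᵀ S F`, and if all `N_q ≥ 2`, the variance
estimator `V̂` satisfies `E[V̂] - Var(τ̂) = N⁻¹ Fᵀ S F`, which is positive semidefinite. -/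
theorem multilevel_cre_neyman (N Q H : ℕ) (Nq : Fin Q → ℕ) (hq : ∀ q, 1 ≤ Nq q)
    (hsum : ∑ q, Nq q = N) (Y : Fin N → Fin Q → ℝ) (F : Fin Q → Fin H → ℝ)
    (hF : ∀ h, ∑ q, F q h = 0) :
    (∀ h, avgOver (assignSet N Q Nq) (fun z => tauhatQ Y Nq F z h) = tauQ Y F h)
    ∧ (∀ h h', covOver (assignSet N Q Nq)
          (fun z => tauhatQ Y Nq F z h) (fun z => tauhatQ Y Nq F z h')
        = (∑ q, F q h * F q h' * fpCovQ Y q q / (Nq q : ℝ))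
          - (∑ q, ∑ q', F q h * fpCovQ Y q q' * F q' h') / (N : ℝ))
    ∧ ((∀ q, 2 ≤ Nq q) →
        (∀ h h', avgOver (assignSet N Q Nq) (fun z => vhatQ Y Nq F z h h')
            - covOver (assignSet N Q Nq)
                (fun z => tauhatQ Y Nq F z h) (fun z => tauhatQ Y Nq F z h')
          = (∑ q, ∑ q', F q h * fpCovQ Y q q' * F q' h') / (N : ℝ))
        ∧ (Matrix.of fun h h' : Fin H =>
            (∑ q, ∑ q', F q h * fpCovQ Y q q' * F q' h') / (N : ℝ)).PosSemidef) := by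
  classical
  by_cases hN2 : 2 ≤ N
  · -- main case : N ≥ 2
    have hN2r : (2 : ℝ) ≤ (N : ℝ) := by exact_mod_cast hN2
    have hNr : (N : ℝ) ≠ 0 := by linarith
    have hN1 : (N : ℝ) - 1 ≠ 0 := by linarith
    have hne : (assignSet N Q Nq).Nonempty := assignSet_nonempty N Q Nq hsum
    have hM : ((assignSet N Q Nq).card : ℝ) ≠ 0 :=
      Nat.cast_ne_zero.mpr (Finset.card_ne_zero_of_mem hne.choose_spec)
    have hm : ∀ q, (Nq q : ℝ) ≠ 0 := fun q => Nat.cast_ne_zero.mpr (by have := hq q; omega)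
    have hunb : ∀ h, avgOver (assignSet N Q Nq) (fun z => tauhatQ Y Nq F z h)
        = tauQ Y F h := by
      intro h
      simp only [tauhatQ]
      rw [avgOver_weighted]
      simp only [tauQ]
      exact Finset.sum_congr rfl fun q _ => by rw [avg_yhat Y hNr hM q (hm q)]
    have havg2 : ∀ h h', avgOver (assignSet N Q Nq)
          (fun z => tauhatQ Y Nq F z h * tauhatQ Y Nq F z h')
        = ∑ q, ∑ q', (F q h * F q' h') *
            (ybarQ Y q * ybarQ Y q' + (if q = q' then fpCovQ Y q q / (Nq q : ℝ) else 0)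
              - fpCovQ Y q q' / (N : ℝ)) := by
      intro h h'
      have hpt : ∀ z ∈ assignSet N Q Nq, tauhatQ Y Nq F z h * tauhatQ Y Nq F z h'
          = ∑ q, ∑ q', (F q h * F q' h') * (yhatQ Y Nq z q * yhatQ Y Nq z q') := by
        intro z _
        simp only [tauhatQ]
        rw [Finset.sum_mul_sum]
        exact Finset.sum_congr rfl fun q _ => Finset.sum_congr rfl fun q' _ => by ring
      rw [avgOver_congr hpt, avgOver_sum]
      refine Finset.sum_congr rfl fun q _ => ?_
      rw [avgOver_sum]
      refine Finset.sum_congr rfl fun q' _ => ?_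
      rw [avgOver_const_mul, avg_yhat_mul Y hNr hN1 hM q q' (hm q) (hm q')]
    have hcov : ∀ h h', covOver (assignSet N Q Nq)
          (fun z => tauhatQ Y Nq F z h) (fun z => tauhatQ Y Nq F z h')
        = (∑ q, F q h * F q h' * fpCovQ Y q q / (Nq q : ℝ))
          - (∑ q, ∑ q', F q h * fpCovQ Y q q' * F q' h') / (N : ℝ) := by
      intro h h'
      rw [covOver_eq hne, havg2 h h', hunb h, hunb h']
      have hT1 : ∑ q, ∑ q', (F q h * F q' h') * (ybarQ Y q * ybarQ Y q')
          = (∑ q, F q h * ybarQ Y q) * (∑ q', F q' h' * ybarQ Y q') := by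
        rw [Finset.sum_mul_sum]
        exact Finset.sum_congr rfl fun q _ => Finset.sum_congr rfl fun q' _ => by ring
      have hT2 : ∀ q : Fin Q, ∑ q', (F q h * F q' h') *
            (if q = q' then fpCovQ Y q q / (Nq q : ℝ) else 0)
          = F q h * F q h' * fpCovQ Y q q / (Nq q : ℝ) := by
        intro q
        rw [Finset.sum_eq_single q]
        · rw [if_pos rfl]; ring
        · intro b _ hb
          rw [if_neg (fun hh => hb hh.symm), mul_zero]
        · intro hq'; exact absurd (Finset.mem_univ q) hq'
      have hT3 : ∑ q, ∑ q', (F q h * F q' h') * (fpCovQ Y q q' / (N : ℝ))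
          = (∑ q, ∑ q', F q h * fpCovQ Y q q' * F q' h') / (N : ℝ) := by
        rw [Finset.sum_div]
        refine Finset.sum_congr rfl fun q _ => ?_
        rw [Finset.sum_div]
        refine Finset.sum_congr rfl fun q' _ => ?_
        ring
      have hexpand : ∑ q, ∑ q', (F q h * F q' h') *
            (ybarQ Y q * ybarQ Y q' + (if q = q' then fpCovQ Y q q / (Nq q : ℝ) else 0)
              - fpCovQ Y q q' / (N : ℝ))
          = (∑ q, ∑ q', (F q h * F q' h') * (ybarQ Y q * ybarQ Y q'))
            + (∑ q, ∑ q', (F q h * F q' h') *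
                (if q = q' then fpCovQ Y q q / (Nq q : ℝ) else 0))
            - ∑ q, ∑ q', (F q h * F q' h') * (fpCovQ Y q q' / (N : ℝ)) := by
        simp only [mul_add, mul_sub, Finset.sum_add_distrib, Finset.sum_sub_distrib]
      rw [hexpand, hT1, Finset.sum_congr rfl fun q _ => hT2 q, hT3]
      simp only [tauQ]
      ring
    refine ⟨hunb, hcov, ?_⟩
    intro h2
    constructor
    · intro h h'
      have hm1 : ∀ q, (Nq q : ℝ) - 1 ≠ 0 := by
        intro q
        have : (2 : ℝ) ≤ (Nq q : ℝ) := by exact_mod_cast h2 q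
        linarith
      have hvg : avgOver (assignSet N Q Nq) (fun z => vhatQ Y Nq F z h h')
          = ∑ q, F q h * F q h' * fpCovQ Y q q / (Nq q : ℝ) := by
        have hpt : ∀ z ∈ assignSet N Q Nq, vhatQ Y Nq F z h h'
            = ∑ q, (F q h * F q h' / (Nq q : ℝ)) * shatQ Y Nq z q := by
          intro z _
          simp only [vhatQ]
          exact Finset.sum_congr rfl fun q _ => by ring
        rw [avgOver_congr hpt, avgOver_sum]
        refine Finset.sum_congr rfl fun q _ => ?_
        rw [avgOver_const_mul, avg_shat Y hNr hN1 hM q (hm q) (hm1 q)]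
        ring
      rw [hvg, hcov h h']
      ring
    · -- positive semidefiniteness via a Gram matrix representation
      have hpos : (0 : ℝ) < (N : ℝ) * ((N : ℝ) - 1) := by nlinarith
      set a : ℝ := Real.sqrt (((N : ℝ) * ((N : ℝ) - 1))⁻¹) with ha
      have ha2 : a * a = ((N : ℝ) * ((N : ℝ) - 1))⁻¹ :=
        Real.mul_self_sqrt (by positivity)
      set A : Matrix (Fin N) (Fin H) ℝ :=
        Matrix.of (fun i hh => a * ∑ q, F q hh * (Y i q - ybarQ Y q)) with hA
      have hMeq : (Matrix.of fun h h' : Fin H =>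
            (∑ q, ∑ q', F q h * fpCovQ Y q q' * F q' h') / (N : ℝ)) = A.conjTranspose * A := by
        ext h h'
        rw [Matrix.mul_apply]
        simp only [Matrix.conjTranspose_apply, Matrix.of_apply, star_trivial, hA]
        have hkey : ∑ q, ∑ q', F q h * fpCovQ Y q q' * F q' h'
            = (∑ i, (∑ q, F q h * (Y i q - ybarQ Y q))
                * (∑ q, F q h' * (Y i q - ybarQ Y q))) / ((N : ℝ) - 1) := by
          simp only [fpCovQ]
          have hterm : ∀ q q' : Fin Q, F q h *
                ((∑ i, (Y i q - ybarQ Y q) * (Y i q' - ybarQ Y q')) / ((N : ℝ) - 1)) * F q' h'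
              = (∑ i, (F q h * (Y i q - ybarQ Y q)) * (F q' h' * (Y i q' - ybarQ Y q')))
                / ((N : ℝ) - 1) := by
            intro q q'
            rw [Finset.sum_congr rfl (fun i _ => by ring :
              ∀ i ∈ Finset.univ, (F q h * (Y i q - ybarQ Y q))
                  * (F q' h' * (Y i q' - ybarQ Y q'))
                = F q h * F q' h' * ((Y i q - ybarQ Y q) * (Y i q' - ybarQ Y q'))),
              ← Finset.mul_sum]
            ring
          rw [Finset.sum_congr rfl fun q _ =>
            Finset.sum_congr rfl fun q' _ => hterm q q']
          rw [Finset.sum_congr rfl fun q _ => (Finset.sum_div _ _ _).symm, ← Finset.sum_div]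
          congr 1
          have hswap : ∀ i : Fin N, (∑ q, F q h * (Y i q - ybarQ Y q))
              * (∑ q, F q h' * (Y i q - ybarQ Y q))
              = ∑ q, ∑ q', (F q h * (Y i q - ybarQ Y q))
                  * (F q' h' * (Y i q' - ybarQ Y q')) := fun i => Finset.sum_mul_sum _ _ _ _
          rw [Finset.sum_congr rfl fun i _ => hswap i]
          exact (Finset.sum_congr rfl fun q _ => Finset.sum_comm).trans Finset.sum_comm
        rw [hkey]
        rw [Finset.sum_congr rfl (fun i _ => by ring :
          ∀ i ∈ Finset.univ, (a * ∑ q, F q h * (Y i q - ybarQ Y q))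
              * (a * ∑ q, F q h' * (Y i q - ybarQ Y q))
            = (a * a) * ((∑ q, F q h * (Y i q - ybarQ Y q))
                * (∑ q, F q h' * (Y i q - ybarQ Y q)))), ← Finset.mul_sum, ha2]
        rw [div_div, inv_mul_eq_div]
        congr 1
        ring
      rw [hMeq]
      exact Matrix.posSemidef_conjTranspose_mul_self A
  · -- degenerate case : N ≤ 1, so the contrast matrix vanishes
    have hF0 : ∀ (q : Fin Q) (hh : Fin H), F q hh = 0 := by
      intro q hh
      have hqN : Nq q ≤ N := by
        rw [← hsum]
        exact Finset.single_le_sum (f := fun r => Nq r) (fun r _ => Nat.zero_le _)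
          (Finset.mem_univ q)
      have hN1' : N = 1 := by have := hq q; omega
      have hQle : Q ≤ 1 := by
        have hc : Q * 1 ≤ ∑ r, Nq r := by
          calc Q * 1 = ∑ _r : Fin Q, 1 := by simp
            _ ≤ ∑ r, Nq r := Finset.sum_le_sum fun r _ => hq r
        omega
      have hQ1 : Q = 1 := le_antisymm hQle q.pos
      subst hQ1
      have hzero := hF hh
      rw [Fin.sum_univ_one] at hzero
      rw [Subsingleton.elim q 0]
      exact hzero
    refine ⟨?_, ?_, ?_⟩
    · intro h
      simp [avgOver, tauhatQ, tauQ, hF0]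
    · intro h h'
      simp [covOver, avgOver, tauhatQ, hF0]
    · intro _
      constructor
      · intro h h'
        simp [covOver, avgOver, tauhatQ, vhatQ, hF0]
      · apply posSemidef_of_zero
        intro a b
        simp [hF0]
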